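/- Let h be a Lie algebra and E a vector space over a field of characteristic zero, and let a ↦ δ(a) be a Lie algebra homomorphism from h into the Lie algebra of coderivations of the deconcatenation coalgebra S(E) with δ(a)(1) = 0. Give E the h-module structure μ₁(a) = pr_E∘δ(a)|_E and give Hom(S²E, E) the h-module structure (a·φ)(e₁⊙e₂) = μ₁(a)(φ(e₁⊙e₂)) − φ((μ₁(a)e₁)⊙e₂) − φ(e₁⊙(μ₁(a)e₂)). Then the second components R₂(a) := pr_E ∘ δ(a)|_{S²E} form a Chevalley–Eilenberg 1-cocycle R₂ : h → Hom(S²E, E): R₂([a,b]) = a·R₂(b) − b·R₂(a) for all a, b ∈ h. -/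

import Mathlib

/-!
Formalization of a statement from "Exponential map and L∞ algebra associated to a Lie pair"
(Laurent-Gengoux, Stiénon, Xu), in the algebraic setting of a Lie pair (g, h) over a field
of characteristic zero.
-/

noncomputable section
open scoped TensorProduct
open UniversalEnvelopingAlgebra

variable (K : Type*) [Field K] [CharZero K]

section Sym
variable (E : Type*) [AddCommGroup E] [Module K E]

/-- Model of the symmetric algebra `S(E)`: polynomials on a basis of `E`. -/
abbrev SymA := MvPolynomial (Module.Basis.ofVectorSpaceIndex K E) K

/-- The canonical inclusion `E → S(E)` (onto `S¹(E)`). -/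
def symι : E →ₗ[K] SymA K E :=
  (Finsupp.linearCombination K (fun i => MvPolynomial.X i)).comp
    ((Module.Basis.ofVectorSpace K E).repr : E ≃ₗ[K] _).toLinearMap

/-- Universal property of `S(E)`: the lift of a linear map into a commutative algebra,
i.e. the unique algebra morphism `S(E) → A` extending it. -/
def symLift {A : Type*} [CommRing A] [Algebra K A] (f : E →ₗ[K] A) : SymA K E →ₐ[K] A :=
  MvPolynomial.aeval fun i => f (Module.Basis.ofVectorSpace K E i)

/-- The deconcatenation comultiplication on `S(E)`, i.e. the unique algebra morphism
`S(E) → S(E) ⊗ S(E)` sending each `e ∈ E` to `e ⊗ 1 + 1 ⊗ e`. -/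
def symComul : SymA K E →ₐ[K] (SymA K E ⊗[K] SymA K E) :=
  symLift K E ((((TensorProduct.mk K (SymA K E) (SymA K E)).flip 1)
    + (TensorProduct.mk K (SymA K E) (SymA K E) 1)).comp (symι K E))

/-- The counit of `S(E)`: the unique algebra morphism `S(E) → K` killing `E`. -/
def symCounit : SymA K E →ₐ[K] K := symLift K E 0

/-- The projection `S(E) → E` onto the degree-one component `S¹(E) = E`. -/
def symPr : SymA K E →ₗ[K] E :=
  (Finsupp.lsum K fun xs : (Module.Basis.ofVectorSpaceIndex K E) →₀ ℕ =>
    (LinearMap.ringLmapEquivSelf K K E).symm <|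
      letI := Classical.propDecidable (∃ i, xs = Finsupp.single i 1)
      if h : ∃ i, xs = Finsupp.single i 1 then (Module.Basis.ofVectorSpace K E) h.choose else 0)
    ∘ₗ (AddMonoidAlgebra.coeffLinearEquiv K).toLinearMap

/-- The unique derivation of `S(E)` extending the linear map `f : E → E`. -/
def symDer (f : E →ₗ[K] E) : SymA K E →ₗ[K] SymA K E :=
  (MvPolynomial.mkDerivation K fun i => symι K E (f (Module.Basis.ofVectorSpace K E i)) :
    Derivation K (SymA K E) (SymA K E)).toLinearMap

/-- The filtration `S^{≤n}(E)`: the span of products of at most `n` elements of `E`. -/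
def symFil (n : ℕ) : Submodule K (SymA K E) :=
  Submodule.span K {x | ∃ (m : ℕ) (v : Fin m → E), m ≤ n ∧ x = ∏ i, symι K E (v i)}

/-- `S^{≥1}(E) = ⊕_{m≥1} Sᵐ(E)`: the span of products of at least one element of `E`. -/
def symFilGe1 : Submodule K (SymA K E) :=
  Submodule.span K {x | ∃ (m : ℕ) (v : Fin m → E), 1 ≤ m ∧ x = ∏ i, symι K E (v i)}

/-- A coderivation of the (deconcatenation) coalgebra `S(E)`:
`Δ ∘ δ = (δ ⊗ id + id ⊗ δ) ∘ Δ`. -/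
def IsCoderivation (δ : SymA K E →ₗ[K] SymA K E) : Prop :=
  ∀ s, symComul K E (δ s)
    = TensorProduct.map δ LinearMap.id (symComul K E s)
      + TensorProduct.map LinearMap.id δ (symComul K E s)

end Sym

section AuxLemmas
open MvPolynomial
set_option linter.unusedSectionVars false
variable {K}
variable {E : Type*} [AddCommGroup E] [Module K E]

lemma symι_basis (i : Module.Basis.ofVectorSpaceIndex K E) :
    symι K E (Module.Basis.ofVectorSpace K E i) = X i := by
  rw [symι]
  simp only [LinearMap.comp_apply, LinearEquiv.coe_coe, Module.Basis.repr_self]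
  simp

lemma symLift_ι {A : Type*} [CommRing A] [Algebra K A] (f : E →ₗ[K] A) (e : E) :
    symLift K E f (symι K E e) = f e := by
  conv_rhs => rw [← Module.Basis.linearCombination_repr (Module.Basis.ofVectorSpace K E) e]
  rw [symι, symLift]
  simp only [LinearMap.comp_apply, LinearEquiv.coe_coe, Finsupp.linearCombination_apply]
  rw [Finsupp.sum, map_sum, Finsupp.sum]
  simp

set_option linter.unusedSectionVars false







lemma comul_ι (e : E) :
    symComul K E (symι K E e) = symι K E e ⊗ₜ[K] 1 + 1 ⊗ₜ[K] symι K E e := by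
  rw [symComul, symLift_ι]; rfl

-- scaling algebra map
variable (K E) in
def symScale (c : K) : SymA K E →ₐ[K] SymA K E := aeval fun i => c • X i

lemma symι_coe (i : Module.Basis.ofVectorSpaceIndex K E) : symι K E (i : E) = X i := by
  rw [← symι_basis (K := K) (E := E) i, Module.Basis.ofVectorSpace_apply_self]

lemma symScale_ι (c : K) (e : E) : symScale K E c (symι K E e) = c • symι K E e := by
  have : symScale K E c = symLift K E (c • symι K E) := by
    apply algHom_ext
    intro i
    rw [symScale, symLift]
    simp [symι_coe, Module.Basis.ofVectorSpace_apply_self]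
  rw [this, symLift_ι]; rfl

lemma symScale_one : symScale K E (1 : K) = AlgHom.id K (SymA K E) := by
  apply algHom_ext; intro i; simp [symScale]

lemma symScale_add (s t : K) (p : SymA K E) :
    symScale K E (s + t) p
      = Algebra.TensorProduct.productMap (symScale K E s) (symScale K E t) (symComul K E p) := by
  have : symScale K E (s + t)
      = (Algebra.TensorProduct.productMap (symScale K E s) (symScale K E t)).comp
          (symComul K E) := by
    apply algHom_ext
    intro i
    rw [AlgHom.comp_apply, ← symι_basis (K := K) (E := E) i, comul_ι]
    simp only [map_add, Algebra.TensorProduct.productMap_apply_tmul, map_one, symScale_ι,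
      symι_basis, one_mul, mul_one]
    simp [symScale, add_smul]
  rw [this]; rfl

lemma coeff_symScale (c : K) (p : SymA K E) (m : (Module.Basis.ofVectorSpaceIndex K E) →₀ ℕ) :
    coeff m (symScale K E c p) = c ^ (m.sum fun _ n => n) * coeff m p := by
  have hmono : ∀ (d : (Module.Basis.ofVectorSpaceIndex K E) →₀ ℕ) (r : K),
      symScale K E c (monomial d r) = c ^ (d.sum fun _ n => n) • monomial d r := by
    intro d r
    rw [symScale, aeval_monomial]
    have h1 : (d.prod fun i k => (c • X i : SymA K E) ^ k)
        = C (c ^ (d.sum fun _ n => n)) * d.prod fun i k => (X i : SymA K E) ^ k := by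
      rw [Finsupp.prod, Finsupp.prod, Finsupp.sum, ← Finset.prod_pow_eq_pow_sum]
      rw [Finset.prod_congr rfl fun i _ => by
        rw [smul_eq_C_mul, mul_pow, ← C_pow]]
      rw [Finset.prod_mul_distrib, ← map_prod]
    rw [h1, monomial_eq, smul_eq_C_mul, MvPolynomial.algebraMap_eq]
    ring
  conv_lhs => rw [p.as_sum, map_sum]
  rw [MvPolynomial.coeff_sum]
  classical
  by_cases hm : m ∈ p.support
  · rw [Finset.sum_eq_single m]
    · rw [hmono, MvPolynomial.coeff_smul, coeff_monomial, if_pos rfl, smul_eq_mul]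
    · intro b _ hb
      rw [hmono, MvPolynomial.coeff_smul, coeff_monomial, if_neg hb, smul_zero]
    · intro h; exact absurd hm h
  · rw [Finset.sum_eq_zero, MvPolynomial.notMem_support_iff.mp hm, mul_zero]
    intro b hb
    have hbm : b ≠ m := fun h => hm (h ▸ hb)
    rw [hmono, MvPolynomial.coeff_smul, coeff_monomial, if_neg hbm, smul_zero]

lemma degree_one_iff (m : (Module.Basis.ofVectorSpaceIndex K E) →₀ ℕ) :
    (m.sum fun _ n => n) = 1 ↔ ∃ i, m = Finsupp.single i 1 := by
  constructor
  · intro h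
    have hcard : m.support.card = 1 := by
      have hle : m.support.card ≤ (m.sum fun _ n => n) := by
        rw [Finsupp.sum]
        calc m.support.card = ∑ _i ∈ m.support, 1 := by simp
        _ ≤ ∑ i ∈ m.support, m i := Finset.sum_le_sum fun i hi =>
            Nat.one_le_iff_ne_zero.mpr (Finsupp.mem_support_iff.mp hi)
      have hne : m.support.card ≠ 0 := by
        intro h0
        rw [Finset.card_eq_zero, Finsupp.support_eq_empty] at h0
        rw [h0] at h; simp at h
      omega
    obtain ⟨i, hsupp⟩ := Finset.card_eq_one.mp hcard
    obtain ⟨hne, heq⟩ := Finsupp.support_eq_singleton.mp hsupp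
    rw [Finsupp.sum, hsupp, Finset.sum_singleton] at h
    exact ⟨i, by rw [← h]; exact heq⟩
  · rintro ⟨i, rfl⟩
    rw [Finsupp.sum_single_index (by rfl)]

lemma primitive_coeff_eq_zero {p : SymA K E}
    (hp : symComul K E p = p ⊗ₜ[K] 1 + 1 ⊗ₜ[K] p)
    (m : (Module.Basis.ofVectorSpaceIndex K E) →₀ ℕ) (hm : (m.sum fun _ n => n) ≠ 1) :
    coeff m p = 0 := by
  have h2 : symScale K E (2 : K) p = (2 : K) • p := by
    have := symScale_add (K := K) (E := E) 1 1 p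
    rw [hp] at this
    simp only [map_add, Algebra.TensorProduct.productMap_apply_tmul, map_one, one_mul,
      mul_one, symScale_one, AlgHom.coe_id, id_eq] at this
    rw [show ((1 : K) + 1) = (2 : K) by norm_num] at this
    rw [this, two_smul]
  have := congrArg (coeff m) h2
  rw [coeff_symScale, MvPolynomial.coeff_smul, smul_eq_mul] at this
  set d := m.sum fun _ n => n with hd
  by_contra hc
  have h2d : (2 : K) ^ d = 2 := mul_right_cancel₀ hc this
  have : ((2 ^ d : ℕ) : K) = ((2 ^ 1 : ℕ) : K) := by push_cast; rw [h2d]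
  have := Nat.cast_injective (R := K) this
  exact hm (Nat.pow_right_injective (le_refl 2) this)

lemma symPr_monomial (m : (Module.Basis.ofVectorSpaceIndex K E) →₀ ℕ) (c : K) :
    symPr K E (monomial m c)
      = (letI := Classical.propDecidable (∃ i, m = Finsupp.single i 1)
        if h : ∃ i, m = Finsupp.single i 1 then c • (Module.Basis.ofVectorSpace K E) h.choose
        else 0) := by
  rw [← MvPolynomial.single_eq_monomial, symPr]
  rw [LinearMap.comp_apply]
  erw [Finsupp.lsum_single (S := K)]
  rw [LinearMap.ringLmapEquivSelf_symm_apply]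
  by_cases h : ∃ i, m = Finsupp.single i 1
  · rw [dif_pos h]
    simp [dif_pos h]
  · rw [dif_neg h]
    simp [dif_neg h]

lemma symPr_monomial_single (i : Module.Basis.ofVectorSpaceIndex K E) (c : K) :
    symPr K E (monomial (Finsupp.single i 1) c) = c • (Module.Basis.ofVectorSpace K E) i := by
  rw [symPr_monomial]
  have h : ∃ j, Finsupp.single i 1 = Finsupp.single j (1 : ℕ) := ⟨i, rfl⟩
  rw [dif_pos h]
  have : h.choose = i := by
    have := h.choose_spec
    exact (Finsupp.single_left_injective (one_ne_zero) this.symm)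
  rw [this]

lemma symPr_monomial_ne (m : (Module.Basis.ofVectorSpaceIndex K E) →₀ ℕ) (c : K)
    (hm : ¬∃ i, m = Finsupp.single i 1) : symPr K E (monomial m c) = 0 := by
  rw [symPr_monomial, dif_neg hm]

/-- If all coefficients away from degree one vanish, `p` lies in `S¹(E)`. -/
lemma eq_ι_pr_of_coeff {p : SymA K E}
    (h : ∀ m, (m.sum fun _ n => n) ≠ 1 → coeff m p = 0) :
    p = symι K E (symPr K E p) := by
  conv_lhs => rw [p.as_sum]
  conv_rhs => rw [p.as_sum, map_sum, map_sum]
  refine Finset.sum_congr rfl fun m hm => ?_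
  have hc : coeff m p ≠ 0 := MvPolynomial.mem_support_iff.mp hm
  have hd : (m.sum fun _ n => n) = 1 := by
    by_contra hd; exact hc (h m hd)
  obtain ⟨i, rfl⟩ := (degree_one_iff m).mp hd
  rw [symPr_monomial_single, map_smul, symι_basis, smul_eq_C_mul, MvPolynomial.X,
    C_mul_monomial, mul_one]

lemma symPr_eq_zero_of_coeff {p : SymA K E}
    (h : ∀ i, coeff (Finsupp.single i 1) p = 0) : symPr K E p = 0 := by
  conv_lhs => rw [p.as_sum, map_sum]
  refine Finset.sum_eq_zero fun m _ => ?_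
  by_cases hm : ∃ i, m = Finsupp.single i 1
  · obtain ⟨i, rfl⟩ := hm
    simp [h i]
  · exact symPr_monomial_ne m _ hm

lemma symPr_ι (e : E) : symPr K E (symι K E e) = e := by
  conv_rhs => rw [← Module.Basis.linearCombination_repr (Module.Basis.ofVectorSpace K E) e]
  rw [symι]
  simp only [LinearMap.comp_apply, LinearEquiv.coe_coe, Finsupp.linearCombination_apply]
  rw [Finsupp.sum, map_sum, Finsupp.sum]
  refine Finset.sum_congr rfl fun i _ => ?_
  rw [map_smul, MvPolynomial.X, symPr_monomial_single, one_smul]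

lemma symPr_quad (u v : E) : symPr K E (symι K E u * symι K E v) = 0 := by
  refine symPr_eq_zero_of_coeff fun i => ?_
  have h4 : symScale K E (2 : K) (symι K E u * symι K E v)
      = (4 : K) • (symι K E u * symι K E v) := by
    rw [map_mul, symScale_ι, symScale_ι, smul_mul_smul_comm]
    norm_num
  have hh := congrArg (coeff (Finsupp.single i 1)) h4
  rw [coeff_symScale, MvPolynomial.coeff_smul, Finsupp.sum_single_index (by rfl),
    pow_one, smul_eq_mul] at hh
  have hz : ((4 : K) - 2) * coeff (Finsupp.single i 1) (symι K E u * symι K E v) = 0 := by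
    rw [sub_mul, hh]; ring
  have h42 : ((4 : K) - 2) ≠ 0 := by norm_num
  exact (mul_eq_zero.mp hz).resolve_left h42

section Coder
variable {D : SymA K E →ₗ[K] SymA K E}
  (hD : IsCoderivation K E D) (hD1 : D 1 = 0)

include hD hD1

lemma coder_prim (e : E) :
    symComul K E (D (symι K E e)) = D (symι K E e) ⊗ₜ[K] 1 + 1 ⊗ₜ[K] D (symι K E e) := by
  rw [hD (symι K E e), comul_ι]
  simp [TensorProduct.map_tmul, hD1]

lemma coder_ι (e : E) : D (symι K E e) = symι K E (symPr K E (D (symι K E e))) :=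
  eq_ι_pr_of_coeff fun m hm => primitive_coeff_eq_zero (coder_prim hD hD1 e) m hm

omit hD hD1 in
lemma comul_quad (u v : E) :
    symComul K E (symι K E u * symι K E v)
      = (symι K E u * symι K E v) ⊗ₜ[K] 1 + 1 ⊗ₜ[K] (symι K E u * symι K E v)
        + symι K E u ⊗ₜ[K] symι K E v + symι K E v ⊗ₜ[K] symι K E u := by
  rw [map_mul, comul_ι, comul_ι]
  rw [add_mul, mul_add, mul_add, Algebra.TensorProduct.tmul_mul_tmul,
    Algebra.TensorProduct.tmul_mul_tmul, Algebra.TensorProduct.tmul_mul_tmul,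
    Algebra.TensorProduct.tmul_mul_tmul]
  simp only [mul_one, one_mul]
  abel

lemma coder_quad' (e₁ e₂ f₁ f₂ : E)
    (h1 : D (symι K E e₁) = symι K E f₁) (h2 : D (symι K E e₂) = symι K E f₂) :
    D (symι K E e₁ * symι K E e₂)
      = symι K E (symPr K E (D (symι K E e₁ * symι K E e₂)))
        + symι K E f₁ * symι K E e₂ + symι K E e₁ * symι K E f₂ := by
  have hprim : symComul K E (D (symι K E e₁ * symι K E e₂)
        - symι K E f₁ * symι K E e₂ - symι K E e₁ * symι K E f₂)
      = (D (symι K E e₁ * symι K E e₂)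
          - symι K E f₁ * symι K E e₂ - symι K E e₁ * symι K E f₂) ⊗ₜ[K] 1
        + 1 ⊗ₜ[K] (D (symι K E e₁ * symι K E e₂)
          - symι K E f₁ * symι K E e₂ - symι K E e₁ * symι K E f₂) := by
    simp only [map_sub]
    rw [hD (symι K E e₁ * symι K E e₂), comul_quad, comul_quad, comul_quad]
    simp only [map_add, TensorProduct.map_tmul, LinearMap.id_coe, id_eq, hD1,
      TensorProduct.zero_tmul, TensorProduct.tmul_zero, h1, h2]
    simp only [TensorProduct.sub_tmul, TensorProduct.tmul_sub]
    abel
  have hzval := eq_ι_pr_of_coeff fun m hm => primitive_coeff_eq_zero hprim m hm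
  have hzpr : symPr K E (D (symι K E e₁ * symι K E e₂)
        - symι K E f₁ * symι K E e₂ - symι K E e₁ * symι K E f₂)
      = symPr K E (D (symι K E e₁ * symι K E e₂)) := by
    simp only [map_sub, symPr_quad]
    abel
  rw [hzpr] at hzval
  rw [sub_sub, sub_eq_iff_eq_add] at hzval
  conv_lhs => rw [hzval]
  abel

lemma coder_quad (e₁ e₂ : E) :
    D (symι K E e₁ * symι K E e₂)
      = symι K E (symPr K E (D (symι K E e₁ * symι K E e₂)))
        + symι K E (symPr K E (D (symι K E e₁))) * symι K E e₂
        + symι K E e₁ * symι K E (symPr K E (D (symι K E e₂))) :=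
  coder_quad' hD hD1 e₁ e₂ _ _ (coder_ι hD hD1 e₁) (coder_ι hD hD1 e₂)

end Coder

end AuxLemmas

attribute [local instance 100] LieRing.ofAssociativeRing



/-- Let `δ : h → coderivations of S(E) with δ(a)(1) = 0` be a Lie algebra
homomorphism. With the `h`-module structures `μ₁(a) = pr_E ∘ δ(a)|_E` on `E` and the induced one
on `Hom(S²E, E)`, the second components `R₂(a) = pr_E ∘ δ(a)|_{S²E}` form a Chevalley–Eilenberg
1-cocycle: `R₂([a,b]) = a·R₂(b) − b·R₂(a)`. -/
theorem second_component_is_cocycle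
    (h : Type*) [LieRing h] [LieAlgebra K h]
    (E : Type*) [AddCommGroup E] [Module K E]
    (δ : h →ₗ⁅K⁆ Module.End K (SymA K E))
    (hcoder : ∀ a : h, IsCoderivation K E (δ a))
    (hone : ∀ a : h, δ a 1 = 0) :
    ∀ (a b : h) (e₁ e₂ : E),
      symPr K E (δ ⁅a, b⁆ (symι K E e₁ * symι K E e₂))
        = (symPr K E (δ a (symι K E (symPr K E (δ b (symι K E e₁ * symι K E e₂)))))
            - symPr K E (δ b (symι K E (symPr K E (δ a (symι K E e₁))) * symι K E e₂))
            - symPr K E (δ b (symι K E e₁ * symι K E (symPr K E (δ a (symι K E e₂))))))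
          - (symPr K E (δ b (symι K E (symPr K E (δ a (symι K E e₁ * symι K E e₂)))))
            - symPr K E (δ a (symι K E (symPr K E (δ b (symι K E e₁))) * symι K E e₂))
            - symPr K E (δ a (symι K E e₁ * symι K E (symPr K E (δ b (symι K E e₂)))))) := by
  intro a b e₁ e₂
  have key : ∀ c d : h,
      symPr K E (δ c (δ d (symι K E e₁ * symι K E e₂)))
        = symPr K E (δ c (symι K E (symPr K E (δ d (symι K E e₁ * symι K E e₂)))))
          + symPr K E (δ c (symι K E (symPr K E (δ d (symι K E e₁))) * symι K E e₂))
          + symPr K E (δ c (symι K E e₁ * symι K E (symPr K E (δ d (symι K E e₂))))) := by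
    intro c d
    conv_lhs => rw [coder_quad (hcoder d) (hone d) e₁ e₂]
    rw [map_add, map_add, map_add, map_add]
  have hbr : δ ⁅a, b⁆ (symι K E e₁ * symι K E e₂)
      = δ a (δ b (symι K E e₁ * symι K E e₂)) - δ b (δ a (symι K E e₁ * symι K E e₂)) := by
    rw [LieHom.map_lie, Ring.lie_def]
    rfl
  rw [hbr, map_sub, key a b, key b a]
  abel
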